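/- Suppose (d+1)(n−1+(nh−1)d) ≠ 0, let W be the n×n matrix with diagonal entries ((n−1)+(n−2+h)d)/D and off-diagonal entries (h−1)d/D, where D = (d+1)(n−1+(nh−1)d), and let δ be a real number. Let r ∈ ℝⁿ be the row vector with r₁ = hd+1, r₂ = ρd − δ, and r_j = ρd for all j ≥ 3. Then the product rW has first entry 1 − (h−1)dδ/D, second entry −((n−1)+(n−2+h)d)δ/D, and all remaining entries equal to −(h−1)dδ/D. (rW is the prediction of the trained GCN layer (A+I)XW on a node whose neighborhood has δ fewer class-2 neighbors than expected.) -/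

import Mathlib

/-- Prediction of the trained GCN layer `(A+I)XW` on a node whose neighborhood has `δ`
fewer class-2 neighbors than expected: with `r = (hd+1, ρd-δ, ρd, …, ρd)` and `W` the
optimal weight matrix, `rW` has first entry `1 - (h-1)dδ/D`, second entry
`-((n-1)+(n-2+h)d)δ/D`, and all remaining entries `-(h-1)dδ/D`. -/
theorem h2gcn_gcn_selfloop_perturbed_prediction
    (n : ℕ) (hn : 2 ≤ n) (d h : ℝ) (hd : 0 < d)
    (ρ : ℝ) (hρ : ρ = (1 - h) / ((n : ℝ) - 1))
    (D : ℝ) (hDdef : D = (d + 1) * ((n : ℝ) - 1 + ((n : ℝ) * h - 1) * d)) (hD : D ≠ 0)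
    (W : Matrix (Fin n) (Fin n) ℝ)
    (hW : ∀ i j, W i j =
      if i = j then (((n : ℝ) - 1) + ((n : ℝ) - 2 + h) * d) / D
      else (h - 1) * d / D)
    (δ : ℝ) (r : Fin n → ℝ)
    (hr : ∀ j : Fin n, r j =
      if (j : ℕ) = 0 then h * d + 1
      else if (j : ℕ) = 1 then ρ * d - δ
      else ρ * d) :
    ∀ j : Fin n, Matrix.vecMul r W j =
      if (j : ℕ) = 0 then 1 - (h - 1) * d * δ / D
      else if (j : ℕ) = 1 then -((((n : ℝ) - 1) + ((n : ℝ) - 2 + h) * d) * δ) / D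
      else -((h - 1) * d * δ) / D := by
  have hn2 : (2:ℝ) ≤ (n:ℝ) := by exact_mod_cast hn
  have hn1 : ((n:ℝ) - 1) ≠ 0 := by linarith
  set off : ℝ := (h - 1) * d / D with hoff
  set dia : ℝ := (((n : ℝ) - 1) + ((n : ℝ) - 2 + h) * d) / D with hdia
  have e0 : Fin n := ⟨0, by omega⟩
  have hr' : ∀ i : Fin n, r i = ρ * d
      + (if i = (⟨0, by omega⟩ : Fin n) then h * d + 1 - ρ * d else 0)
      + (if i = (⟨1, by omega⟩ : Fin n) then -δ else 0) := by
    intro i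
    rw [hr]
    by_cases h0 : (i:ℕ) = 0 <;> by_cases h1 : (i:ℕ) = 1
    · omega
    · simp [Fin.ext_iff, h0, h1]; try ring
    · simp [Fin.ext_iff, h0, h1]; try ring
    · simp [Fin.ext_iff, h0, h1]
  have hS : ∑ i, r i = d + 1 - δ := by
    rw [Finset.sum_congr rfl fun i _ => hr' i]
    rw [Finset.sum_add_distrib, Finset.sum_add_distrib]
    rw [Finset.sum_ite_eq' Finset.univ _ (fun _ => h * d + 1 - ρ * d),
        Finset.sum_ite_eq' Finset.univ _ (fun _ => -δ)]
    simp [Finset.sum_const, hρ]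
    field_simp
    ring
  intro j
  have expand : Matrix.vecMul r W j = ∑ i, r i * W i j := by
    simp [Matrix.vecMul, dotProduct]
  have step : ∀ i : Fin n, r i * W i j
      = r i * off + (if i = j then r i * (dia - off) else 0) := by
    intro i
    rw [hW]
    split_ifs <;> ring
  have key : Matrix.vecMul r W j = (d + 1 - δ) * off + r j * (dia - off) := by
    rw [expand, Finset.sum_congr rfl fun i _ => step i, Finset.sum_add_distrib,
        ← Finset.sum_mul, hS, Finset.sum_ite_eq' Finset.univ j]
    simp
  rw [key, hr j, hoff, hdia, hρ, hDdef] at *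
  have hd1 : d + 1 ≠ 0 := by linarith
  have hD2 : ((n : ℝ) - 1 + ((n : ℝ) * h - 1) * d) ≠ 0 := fun h' => hD (by rw [h']; ring)
  have hD3 : (n : ℝ) - 1 + d * (h * (n : ℝ) - 1) ≠ 0 := by
    intro h'; apply hD; linear_combination (d + 1) * h'
  by_cases h0 : (j:ℕ) = 0 <;> by_cases h1 : (j:ℕ) = 1
  · omega
  · simp only [h0, h1, if_true, if_false]
    field_simp
    ring
  · simp only [h0, h1, if_true, if_false, one_ne_zero]
    field_simp
    ring
  · simp only [h0, h1, if_false]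
    field_simp
    ring
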